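/- If the Grover walk on a finite connected regular graph G of degree k is periodic, and all adjacency eigenvalues of G are integers, then every adjacency eigenvalue lies in {±k, ±k/2, 0}. -/

import Mathlib

open Matrix Complex

variable {V : Type*} [Fintype V] [DecidableEq V]

instance (G : SimpleGraph V) : DecidableEq G.Dart :=
  fun a b => decidable_of_iff _ (SimpleGraph.Dart.ext_iff a b).symm

/-- The flip-flop shift on the arc (dart) space. -/
noncomputable def groverShift (G : SimpleGraph V) [DecidableRel G.Adj] :
    Matrix G.Dart G.Dart ℂ :=
  fun a b => if b = a.symm then 1 else 0

/-- The Grover coin, acting blockwise on arcs grouped by tail vertex: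
the block at a vertex `v` of degree `d` is `2/d J - I`. -/
noncomputable def groverCoin (G : SimpleGraph V) [DecidableRel G.Adj] :
    Matrix G.Dart G.Dart ℂ :=
  fun a b => (if a.toProd.1 = b.toProd.1 then (2 : ℂ) / (G.degree a.toProd.1) else 0)
    - (if a = b then 1 else 0)

/-- The Grover walk time-evolution operator `U = S C`. -/
noncomputable def groverU (G : SimpleGraph V) [DecidableRel G.Adj] :
    Matrix G.Dart G.Dart ℂ := groverShift G * groverCoin G

/-- The transition matrix `P = D⁻¹ A` of the simple random walk, over `ℂ`. -/
noncomputable def transMat (G : SimpleGraph V) [DecidableRel G.Adj] :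
    Matrix V V ℂ :=
  fun u v => if G.Adj u v then (1 : ℂ) / (G.degree u) else 0

/-- The boundary map `d : ℂ^V → ℂ^A`, `(dφ)(a) = φ(t(a))/√(deg t(a))`. -/
noncomputable def boundaryMap (G : SimpleGraph V) [DecidableRel G.Adj]
    (φ : V → ℂ) : G.Dart → ℂ :=
  fun a => φ a.toProd.2 / (Real.sqrt (G.degree a.toProd.2) : ℝ)

open Finset Polynomial

lemma rat_of_unity (q : ℚ) (ω : ℂ) (t : ℕ) (ht : 0 < t) (hωt : ω ^ t = 1)
    (hsum : ω + ω⁻¹ = (q : ℂ)) : ∃ m : ℤ, (m : ℚ) = q ∧ |q| ≤ 2 := by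
  have hω0 : ω ≠ 0 := by
    intro h0
    rw [h0, zero_pow ht.ne'] at hωt
    exact zero_ne_one hωt
  have hint : IsIntegral ℤ ω := by
    refine ⟨X ^ t - C 1, monic_X_pow_sub_C 1 ht.ne', ?_⟩
    simp [eval₂_sub, hωt]
  have hinv : ω⁻¹ = ω ^ (t - 1) := by
    refine inv_eq_of_mul_eq_one_right ?_
    rw [← pow_succ', Nat.sub_add_cancel ht]
    exact hωt
  have hqi : IsIntegral ℤ ((q : ℂ)) := by
    rw [← hsum, hinv]
    exact hint.add (hint.pow _)
  have hq : IsIntegral ℤ q := by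
    rw [show ((q : ℂ)) = algebraMap ℚ ℂ q from (eq_ratCast (algebraMap ℚ ℂ) q).symm] at hqi
    exact (isIntegral_algebraMap_iff ((algebraMap ℚ ℂ).injective)).mp hqi
  obtain ⟨m, hm⟩ := IsIntegrallyClosed.isIntegral_iff.mp hq
  have habs : ‖ω‖ = 1 := by
    have h1 : ‖ω‖ ^ t = 1 := by
      rw [← norm_pow, hωt]; exact norm_one
    rcases lt_trichotomy (‖ω‖) 1 with h | h | h
    · exact absurd h1 (by nlinarith [pow_lt_one₀ (norm_nonneg ω) h ht.ne'])
    · exact h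
    · exact absurd h1 (by nlinarith [one_lt_pow₀ h ht.ne'])
  have hb : ‖((q : ℂ))‖ ≤ 2 := by
    rw [← hsum]
    calc ‖ω + ω⁻¹‖ ≤ ‖ω‖ + ‖ω⁻¹‖ := norm_add_le _ _
    _ = 2 := by rw [norm_inv, habs]; norm_num
  have hb' : |q| ≤ 2 := by
    have : ((q : ℂ)) = (((q : ℝ)) : ℂ) := by push_cast; ring
    rw [this, Complex.norm_real, Real.norm_eq_abs] at hb
    exact_mod_cast hb
  exact ⟨m, by exact_mod_cast hm, hb'⟩

lemma shift_mulVec (G : SimpleGraph V) [DecidableRel G.Adj] (ψ : G.Dart → ℂ) (a : G.Dart) :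
    (groverShift G *ᵥ ψ) a = ψ a.symm := by
  simp [groverShift, mulVec, dotProduct]

lemma coin_mulVec (G : SimpleGraph V) [DecidableRel G.Adj] (ψ : G.Dart → ℂ) (a : G.Dart) :
    (groverCoin G *ᵥ ψ) a =
      (2 : ℂ) / (G.degree a.toProd.1) *
        (∑ b ∈ univ.filter (fun b : G.Dart => b.toProd.1 = a.toProd.1), ψ b) - ψ a := by
  simp only [groverCoin, mulVec, dotProduct, sub_mul, ite_mul, one_mul, zero_mul,
    Finset.sum_sub_distrib, Finset.sum_ite_eq]
  rw [Finset.mul_sum, Finset.sum_filter]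
  simp [eq_comm]

lemma fiber_sum (G : SimpleGraph V) [DecidableRel G.Adj] (φ : V → ℂ) (v : V) :
    ∑ b ∈ univ.filter (fun b : G.Dart => b.toProd.1 = v), φ b.toProd.2
      = ∑ u ∈ G.neighborFinset v, φ u := by
  refine Finset.sum_bij' (fun (b : G.Dart) (_ : b ∈ univ.filter (fun b : G.Dart => b.toProd.1 = v)) => b.toProd.2)
    (fun (u : V) (hu : u ∈ G.neighborFinset v) =>
      SimpleGraph.Dart.mk (v, u) ((G.mem_neighborFinset v u).mp hu)) ?_ ?_ ?_ ?_ ?_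
  · intro b hb
    simp only [mem_filter, mem_univ, true_and] at hb
    simp only [SimpleGraph.mem_neighborFinset]
    exact hb ▸ b.adj
  · intro u hu; simp
  · intro b hb
    simp only [mem_filter, mem_univ, true_and] at hb
    exact SimpleGraph.Dart.ext _ _ (Prod.ext hb.symm rfl)
  · intro u hu; rfl
  · intro b hb; rfl

lemma fiber_sum_fst (G : SimpleGraph V) [DecidableRel G.Adj] (φ : V → ℂ) (v : V) :
    ∑ b ∈ univ.filter (fun b : G.Dart => b.toProd.1 = v), φ b.toProd.1
      = (G.degree v : ℂ) * φ v := by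
  have : ∀ b ∈ univ.filter (fun b : G.Dart => b.toProd.1 = v), φ b.toProd.1 = φ v := by
    intro b hb; simp only [mem_filter] at hb; rw [hb.2]
  rw [Finset.sum_congr rfl this, Finset.sum_const, ← SimpleGraph.dart_fst_fiber_card_eq_degree]
  simp [mul_comm]

/-- If the Grover walk on a connected `k`-regular graph with integral adjacency spectrum is
periodic, then every adjacency eigenvalue lies in `{±k, ±k/2, 0}`. -/
theorem grover_periodic_integral_spectrum (G : SimpleGraph V) [DecidableRel G.Adj]
    (hG : G.Connected) (k : ℕ) (hreg : G.IsRegularOfDegree k)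
    (hper : ∃ t : ℕ, 0 < t ∧ groverU G ^ t = 1)
    (hint : ∀ lam : ℝ, (∃ x : V → ℝ, x ≠ 0 ∧ (G.adjMatrix ℝ).mulVec x = lam • x) →
      ∃ z : ℤ, lam = z) :
    ∀ lam : ℝ, (∃ x : V → ℝ, x ≠ 0 ∧ (G.adjMatrix ℝ).mulVec x = lam • x) →
      lam ∈ ({(k : ℝ), -(k : ℝ), (k : ℝ) / 2, -((k : ℝ) / 2), 0} : Set ℝ) := by
  rintro lam hlam
  obtain ⟨x, hx0, hx⟩ := hlam
  obtain ⟨z, hz⟩ := hint lam ⟨x, hx0, hx⟩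
  obtain ⟨v0, hv0'⟩ := Function.ne_iff.mp hx0
  have hv0 : x v0 ≠ 0 := hv0'
  have hxv : ∀ v, ∑ u ∈ G.neighborFinset v, x u = lam * x v := by
    intro v
    have := congrFun hx v
    rw [SimpleGraph.adjMatrix_mulVec_apply] at this
    simpa using this
  by_cases hk : k = 0
  · -- k = 0 : no neighbors, lam = 0
    have hemp : G.neighborFinset v0 = ∅ := by
      apply Finset.card_eq_zero.mp
      have : (G.neighborFinset v0).card = G.degree v0 := rfl
      rw [this, hreg v0, hk]
    have h0 := hxv v0
    rw [hemp, Finset.sum_empty] at h0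
    have : lam = 0 := by
      rcases mul_eq_zero.mp h0.symm with h | h
      · exact h
      · exact absurd h hv0
    simp [this]
  · -- k ≥ 1
    have hk' : (k : ℂ) ≠ 0 := Nat.cast_ne_zero.mpr hk
    set φ : V → ℂ := fun v => (x v : ℂ) with hφ
    have heig : ∀ v, ∑ u ∈ G.neighborFinset v, φ u = (lam : ℂ) * φ v := by
      intro v
      have h2 := congrArg (fun r : ℝ => (r : ℂ)) (hxv v)
      push_cast at h2
      simpa [hφ] using h2
    set μ : ℂ := (lam : ℂ) / k with hμ
    obtain ⟨ω, hω⟩ : ∃ ω : ℂ, ω ^ 2 - 2 * μ * ω + 1 = 0 := by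
      obtain ⟨ω, hroot⟩ := Complex.exists_root
        (f := Polynomial.C 1 * Polynomial.X ^ 2 + Polynomial.C (-(2*μ)) * Polynomial.X
          + Polynomial.C 1)
        (by rw [Polynomial.degree_quadratic one_ne_zero]; norm_num)
      refine ⟨ω, ?_⟩
      have := hroot
      simp only [Polynomial.IsRoot, Polynomial.eval_add, Polynomial.eval_mul,
        Polynomial.eval_pow, Polynomial.eval_C, Polynomial.eval_X] at this
      linear_combination this
    set f : G.Dart → ℂ := fun a => φ a.toProd.2 with hf
    set g : G.Dart → ℂ := fun a => φ a.toProd.1 with hg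
    set h : G.Dart → ℂ := fun a => ω * f a - g a with hh
    have hUh : groverU G *ᵥ h = fun a => ω * h a := by
      funext a
      have h1 : (groverU G *ᵥ h) a = (groverCoin G *ᵥ h) a.symm := by
        rw [groverU, ← mulVec_mulVec, shift_mulVec]
      rw [h1, coin_mulVec]
      have hsum : ∑ b ∈ univ.filter (fun b : G.Dart => b.toProd.1 = a.symm.toProd.1), h b
          = ω * ((lam : ℂ) * φ (a.symm.toProd.1)) - (k : ℂ) * φ (a.symm.toProd.1) := by
        have e1 := fiber_sum G φ a.symm.toProd.1
        have e2 := fiber_sum_fst G φ a.symm.toProd.1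
        rw [hreg] at e2
        calc ∑ b ∈ univ.filter (fun b : G.Dart => b.toProd.1 = a.symm.toProd.1), h b
            = ω * (∑ b ∈ univ.filter (fun b : G.Dart => b.toProd.1 = a.symm.toProd.1),
                φ b.toProd.2)
              - ∑ b ∈ univ.filter (fun b : G.Dart => b.toProd.1 = a.symm.toProd.1),
                φ b.toProd.1 := by
              rw [Finset.mul_sum, ← Finset.sum_sub_distrib]
          _ = _ := by rw [e1, e2, heig]
      rw [hsum, hreg]
      have hsymm1 : a.symm.toProd.1 = a.toProd.2 := rfl
      have hsymm2 : a.symm.toProd.2 = a.toProd.1 := rfl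
      have hω' : (k : ℂ) * ω ^ 2 - 2 * (lam : ℂ) * ω + (k : ℂ) = 0 := by
        have h' := hω
        rw [hμ] at h'
        have h'' := congrArg (fun w : ℂ => (k : ℂ) * w) h'
        simp only [mul_zero] at h''
        field_simp at h''
        linear_combination h''
      simp only [hh, hf, hg, hsymm1, hsymm2]
      field_simp
      linear_combination (-(φ a.toProd.2)) * hω'
    have hUn : ∀ n : ℕ, (groverU G ^ n) *ᵥ h = fun a => ω ^ n * h a := by
      intro n
      induction n with
      | zero => funext a; simp [one_mulVec]
      | succ n ih =>
        rw [pow_succ, ← mulVec_mulVec, hUh]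
        have : (fun a => ω * h a) = ω • h := by funext a; simp
        rw [this, mulVec_smul, ih]
        funext a
        simp [Pi.smul_apply, smul_eq_mul]
        ring
    obtain ⟨t, ht, hUt⟩ := hper
    by_cases hhz : h = 0
    · -- degenerate case : g = ω f, lam = ± k
      have hgf : ∀ a : G.Dart, φ a.toProd.1 = ω * φ a.toProd.2 := by
        intro a
        have := congrFun hhz a
        simp only [hh, hf, hg, Pi.zero_apply] at this
        linear_combination -this
      have hv0' : φ v0 ≠ 0 := by
        simpa [hφ] using Complex.ofReal_ne_zero.mpr hv0
      have hne : (G.neighborFinset v0).Nonempty := by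
        apply Finset.card_pos.mp
        have : (G.neighborFinset v0).card = G.degree v0 := rfl
        rw [this, hreg v0]
        exact Nat.pos_of_ne_zero hk
      obtain ⟨u0, hu0⟩ := hne
      have hadj : G.Adj v0 u0 := (G.mem_neighborFinset v0 u0).mp hu0
      have d1 : φ v0 = ω * φ u0 := hgf ⟨(v0, u0), hadj⟩
      have d2 : φ u0 = ω * φ v0 := hgf ⟨(u0, v0), hadj.symm⟩
      have hω2 : ω ^ 2 = 1 := by
        have e : (ω ^ 2 - 1) * φ v0 = 0 := by
          have e2 : φ v0 = ω * (ω * φ v0) := by rw [← d2, ← d1]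
          linear_combination -e2
        rcases mul_eq_zero.mp e with e | e
        · linear_combination e
        · exact absurd e hv0'
      have hlamk : (lam : ℂ) * φ v0 = (k : ℂ) * ω * φ v0 := by
        rw [← heig v0]
        have : ∀ u ∈ G.neighborFinset v0, φ u = ω * φ v0 := by
          intro u hu
          exact hgf ⟨(u, v0), ((G.mem_neighborFinset v0 u).mp hu).symm⟩
        rw [Finset.sum_congr rfl this, Finset.sum_const]
        have : (G.neighborFinset v0).card = k := by
          have : (G.neighborFinset v0).card = G.degree v0 := rfl
          rw [this, hreg v0]
        rw [this]
        simp only [nsmul_eq_mul]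
        ring
      have hlc : (lam : ℂ) = (k : ℂ) * ω := by
        have e : ((lam : ℂ) - (k : ℂ) * ω) * φ v0 = 0 := by linear_combination hlamk
        rcases mul_eq_zero.mp e with e | e
        · linear_combination e
        · exact absurd e hv0'
      have : (ω - 1) * (ω + 1) = 0 := by linear_combination hω2
      rcases mul_eq_zero.mp this with e | e
      · have : ω = 1 := by linear_combination e
        rw [this, mul_one] at hlc
        have : lam = (k : ℝ) := by exact_mod_cast hlc
        simp [this]
      · have : ω = -1 := by linear_combination e
        rw [this] at hlc
        have : lam = -(k : ℝ) := by
          have : (lam : ℂ) = ((-(k : ℝ) : ℝ) : ℂ) := by rw [hlc]; push_cast; ring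
          exact_mod_cast this
        simp [this]
    · -- main case : ω is a t-th root of unity
      obtain ⟨a0, ha0⟩ := Function.ne_iff.mp hhz
      have hωt : ω ^ t = 1 := by
        have h1 : (groverU G ^ t) *ᵥ h = h := by rw [hUt, one_mulVec]
        have h2 := congrFun (hUn t) a0
        rw [h1] at h2
        have e : (ω ^ t - 1) * h a0 = 0 := by linear_combination -h2
        rcases mul_eq_zero.mp e with e | e
        · linear_combination e
        · exact absurd e ha0
      have hω0 : ω ≠ 0 := by
        intro h0
        rw [h0] at hω
        simp at hω
      have hsum : ω + ω⁻¹ = ((2 * z / k : ℚ) : ℂ) := by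
        have hinv : ω⁻¹ = 2 * μ - ω := by
          refine inv_eq_of_mul_eq_one_right ?_
          linear_combination -hω
        rw [hinv, hμ, hz]
        push_cast
        ring
      obtain ⟨m, hm, hmabs⟩ := rat_of_unity _ ω t ht hωt hsum
      have hk0 : (k : ℝ) ≠ 0 := Nat.cast_ne_zero.mpr hk
      have hlamm : lam = m * k / 2 := by
        have h1 : (m : ℝ) = 2 * lam / k := by
          have := congrArg (fun q : ℚ => (q : ℝ)) hm
          push_cast at this
          rw [← hz] at this
          exact this
        rw [h1]
        field_simp
      have hm2 : -2 ≤ m ∧ m ≤ 2 := by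
        have h3 : |(m : ℚ)| ≤ 2 := by rw [hm]; exact hmabs
        have h4 := abs_le.mp h3
        exact ⟨by exact_mod_cast h4.1, by exact_mod_cast h4.2⟩
      obtain ⟨hml, hmr⟩ := hm2
      interval_cases m <;>
        simp only [Set.mem_insert_iff, Set.mem_singleton_iff] <;>
        push_cast at hlamm
      · right; left; rw [hlamm]; ring
      · right; right; right; left; rw [hlamm]; ring
      · right; right; right; right; rw [hlamm]; ring
      · right; right; left; rw [hlamm]; ring
      · left; rw [hlamm]; ring
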